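/- Define the relation λ ⊑ μ on partitions of length n by: λ_i ≤ μ_i for all i and [λ]_1 ≤ [μ]_1. Then for n = 3, the partitions (1,0,0) and (1,1,0) are both ⊑ (2,1,0) and both ⊑ (1,1,1), but there is no partition ν with (1,0,0) ⊑ ν, (1,1,0) ⊑ ν, and ν ⊑ (2,1,0), ν ⊑ (1,1,1); in particular (1,0,0) and (1,1,0) have no least upper bound with respect to ⊑, so ⊑ is not a lattice order. -/
import Mathlib


/-- Partitions of length 3. -/
def IsPartition3 (a : ℤ × ℤ × ℤ) : Prop :=
  a.2.1 ≤ a.1 ∧ a.2.2 ≤ a.2.1 ∧ 0 ≤ a.2.2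

/-- `[λ]_1 = λ_1 − λ_2 + λ_3`. -/
def br1 (a : ℤ × ℤ × ℤ) : ℤ := a.1 - a.2.1 + a.2.2

/-- The order `λ ⊑ μ`: containment together with `[λ]_1 ≤ [μ]_1`. -/
def SqSub (a b : ℤ × ℤ × ℤ) : Prop :=
  a.1 ≤ b.1 ∧ a.2.1 ≤ b.2.1 ∧ a.2.2 ≤ b.2.2 ∧ br1 a ≤ br1 b

/-- `(1,0,0)` and `(1,1,0)` are both `⊑ (2,1,0)` and `⊑ (1,1,1)`, but no partition `ν`
lies between them; in particular `(1,0,0)` and `(1,1,0)` have no least upper bound for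
`⊑`, so `⊑` is not a lattice order. -/
theorem sqsub_not_lattice :
    SqSub (1, 0, 0) (2, 1, 0) ∧ SqSub (1, 0, 0) (1, 1, 1) ∧
    SqSub (1, 1, 0) (2, 1, 0) ∧ SqSub (1, 1, 0) (1, 1, 1) ∧
    (¬ ∃ ν : ℤ × ℤ × ℤ, IsPartition3 ν ∧ SqSub (1, 0, 0) ν ∧ SqSub (1, 1, 0) ν ∧
        SqSub ν (2, 1, 0) ∧ SqSub ν (1, 1, 1)) ∧
    (¬ ∃ ν : ℤ × ℤ × ℤ, IsPartition3 ν ∧ SqSub (1, 0, 0) ν ∧ SqSub (1, 1, 0) ν ∧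
        ∀ τ : ℤ × ℤ × ℤ, IsPartition3 τ → SqSub (1, 0, 0) τ → SqSub (1, 1, 0) τ →
          SqSub ν τ) := by
  have key : ¬ ∃ ν : ℤ × ℤ × ℤ, IsPartition3 ν ∧ SqSub (1, 0, 0) ν ∧ SqSub (1, 1, 0) ν ∧
      SqSub ν (2, 1, 0) ∧ SqSub ν (1, 1, 1) := by
    rintro ⟨⟨a, b, c⟩, h1, h2, h3, h4, h5⟩
    simp only [IsPartition3, SqSub, br1] at *
    omega
  refine ⟨⟨by norm_num, by norm_num, by norm_num, by norm_num [br1]⟩,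
    ⟨by norm_num, by norm_num, by norm_num, by norm_num [br1]⟩,
    ⟨by norm_num, by norm_num, by norm_num, by norm_num [br1]⟩,
    ⟨by norm_num, by norm_num, by norm_num, by norm_num [br1]⟩, key, ?_⟩
  rintro ⟨ν, hp, h1, h2, hlub⟩
  exact key ⟨ν, hp, h1, h2, hlub (2,1,0) (by norm_num [IsPartition3])
    ⟨by norm_num, by norm_num, by norm_num, by norm_num [br1]⟩
    ⟨by norm_num, by norm_num, by norm_num, by norm_num [br1]⟩,
    hlub (1,1,1) (by norm_num [IsPartition3])
    ⟨by norm_num, by norm_num, by norm_num, by norm_num [br1]⟩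
    ⟨by norm_num, by norm_num, by norm_num, by norm_num [br1]⟩⟩
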